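/- arXiv:math-ph/0503023 — 2 statements merged into one kernel-verified Lean document; each statement's English description precedes it below -/
import Mathlib

section
/- Nishimori gauge identity for a single bond correlation: for every bond b ∈ B, [⟨S_b⟩] = [⟨S_b⟩²]; in particular the quenched bond correlation [⟨S_b⟩] is nonnegative. -/
open MeasureTheory ProbabilityTheory Filter

noncomputable section

/-- The real value ±1 of a Boolean spin. -/
def spin (s : Bool) : ℝ := if s then 1 else -1

/-- The bond spin `S_b = S_n S_{n'}` for a bond `b` with endpoints `ep b = (n, n')`. -/
def bondSpin {V ι : Type*} (ep : ι → V × V) (S : V → Bool) (b : ι) : ℝ :=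
  spin (S (ep b).1) * spin (S (ep b).2)

/-- The potential `U(j, S) = Σ_b x_b j_b S_b`. -/
def potential {V ι : Type*} [Fintype ι] (ep : ι → V × V) (x j : ι → ℝ)
    (S : V → Bool) : ℝ :=
  ∑ b, x b * j b * bondSpin ep S b

/-- The partition function `Z(j) = Σ_S exp U(j,S)`. -/
def partitionFn {V ι : Type*} [Fintype V] [DecidableEq V] [Fintype ι]
    (ep : ι → V × V) (x j : ι → ℝ) : ℝ :=
  ∑ S : V → Bool, Real.exp (potential ep x j S)

/-- The Boltzmann–Gibbs expectation `⟨f⟩` at fixed disorder `j`. -/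
def gibbs {V ι : Type*} [Fintype V] [DecidableEq V] [Fintype ι]
    (ep : ι → V × V) (x j : ι → ℝ) (f : (V → Bool) → ℝ) : ℝ :=
  (∑ S : V → Bool, f S * Real.exp (potential ep x j S)) / partitionFn ep x j

/-- The law of the couplings: independent Gaussians, `j_b` of mean `x_b` and variance 1. -/
def couplings {ι : Type*} [Fintype ι] (x : ι → ℝ) : Measure (ι → ℝ) :=
  Measure.pi fun b => gaussianReal (x b) 1

/-- The quenched average `[F]`. -/
def quenched {ι : Type*} [Fintype ι] (x : ι → ℝ) (F : (ι → ℝ) → ℝ) : ℝ :=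
  ∫ j, F j ∂(couplings x)

/-- The quenched pressure `P({x}) = [ln Z]`. -/
def pressure {V ι : Type*} [Fintype V] [DecidableEq V] [Fintype ι]
    (ep : ι → V × V) (x : ι → ℝ) : ℝ :=
  quenched x fun j => Real.log (partitionFn ep x j)

/-! ### Auxiliary lemmas -/

section Aux

open scoped ENNReal

/-- Marginalizing a product of single-coordinate functions. -/
lemma nishimori_lmarginal_prod {ι : Type*} [Fintype ι] [DecidableEq ι]
    (μ : ι → Measure ℝ) [∀ i, SigmaFinite (μ i)]
    (g : ι → ℝ → ℝ≥0∞) (hg : ∀ i, Measurable (g i)) (s : Finset ι) :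
    ∀ j : ι → ℝ,
      (∫⋯∫⁻_s, (fun j => ∏ i, g i (j i)) ∂μ) j
        = (∏ i ∈ s, ∫⁻ t, g i t ∂(μ i)) * ∏ i ∈ sᶜ, g i (j i) := by
  have hmeas : Measurable fun j : ι → ℝ => ∏ i, g i (j i) :=
    Finset.measurable_prod _ fun i _ => (hg i).comp (measurable_pi_apply i)
  induction s using Finset.induction with
  | empty =>
      intro j
      simp [MeasureTheory.lmarginal_empty, Finset.compl_empty]
  | @insert i s hi ih =>
      intro j
      rw [MeasureTheory.lmarginal_insert _ hmeas hi]
      have hisc : i ∈ sᶜ := Finset.mem_compl.mpr hi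
      have hscompl : sᶜ = insert i ((insert i s)ᶜ) := by
        rw [Finset.compl_insert, Finset.insert_erase hisc]
      have hstep : ∀ t : ℝ,
          (∫⋯∫⁻_s, (fun j => ∏ i, g i (j i)) ∂μ) (Function.update j i t)
            = ((∏ c ∈ s, ∫⁻ u, g c u ∂(μ c)) * ∏ c ∈ (insert i s)ᶜ, g c (j c)) * g i t := by
        intro t
        rw [ih (Function.update j i t)]
        have : ∏ c ∈ sᶜ, g c (Function.update j i t c)
            = g i t * ∏ c ∈ (insert i s)ᶜ, g c (j c) := by
          rw [hscompl, Finset.prod_insert (by simp [Finset.compl_insert])]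
          congr 1
          · simp
          · refine Finset.prod_congr rfl fun c hc => ?_
            have hci : c ≠ i := by
              rw [Finset.compl_insert] at hc
              exact Finset.ne_of_mem_erase hc
            rw [Function.update_of_ne hci]
        rw [this]; ring
      simp_rw [hstep]
      rw [lintegral_const_mul _ (hg i)]
      rw [Finset.prod_insert hi]
      ring

lemma nishimori_lintegral_pi_prod {ι : Type*} [Fintype ι] [DecidableEq ι]
    (μ : ι → Measure ℝ) [∀ i, SigmaFinite (μ i)]
    (g : ι → ℝ → ℝ≥0∞) (hg : ∀ i, Measurable (g i)) :
    ∫⁻ j, ∏ i, g i (j i) ∂(Measure.pi μ) = ∏ i, ∫⁻ t, g i t ∂(μ i) := by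
  rw [MeasureTheory.lintegral_eq_lmarginal_univ (0 : ι → ℝ),
    nishimori_lmarginal_prod μ g hg Finset.univ 0]
  simp

/-- Product measure of measures with densities. -/
lemma nishimori_pi_withDensity {ι : Type*} [Fintype ι] [DecidableEq ι]
    (μ : ι → Measure ℝ) [∀ i, SigmaFinite (μ i)]
    (g : ι → ℝ → ℝ≥0∞) (hg : ∀ i, Measurable (g i))
    [∀ i, SigmaFinite ((μ i).withDensity (g i))] :
    Measure.pi (fun i => (μ i).withDensity (g i))
      = (Measure.pi μ).withDensity fun j => ∏ i, g i (j i) := by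
  refine Measure.pi_eq fun s hs => ?_
  rw [withDensity_apply _ (MeasurableSet.univ_pi hs),
    ← lintegral_indicator (MeasurableSet.univ_pi hs)]
  have hind : ∀ j : ι → ℝ,
      (Set.univ.pi s).indicator (fun j => ∏ i, g i (j i)) j
        = ∏ i, (s i).indicator (g i) (j i) := by
    intro j
    by_cases hj : j ∈ Set.univ.pi s
    · rw [Set.indicator_of_mem hj]
      exact Finset.prod_congr rfl fun i _ =>
        (Set.indicator_of_mem (hj i trivial) _).symm
    · rw [Set.indicator_of_notMem hj]
      rw [Set.mem_univ_pi] at hj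
      push_neg at hj
      obtain ⟨i, hi⟩ := hj
      exact (Finset.prod_eq_zero (Finset.mem_univ i)
        (Set.indicator_of_notMem hi _)).symm
  simp_rw [hind]
  rw [nishimori_lintegral_pi_prod μ _ (fun i => (hg i).indicator (hs i))]
  exact Finset.prod_congr rfl fun i _ => by
    rw [lintegral_indicator (hs i), withDensity_apply _ (hs i)]

lemma nishimori_couplings_eq {ι : Type*} [Fintype ι] (y : ι → ℝ) :
    couplings y = (Measure.pi fun _ : ι => (volume : Measure ℝ)).withDensity
      fun j => ENNReal.ofReal (∏ c, gaussianPDFReal (y c) 1 (j c)) := by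
  classical
  have h1 : ∀ c : ι, gaussianReal (y c) 1
      = (volume : Measure ℝ).withDensity (gaussianPDF (y c) 1) :=
    fun c => gaussianReal_of_var_ne_zero _ one_ne_zero
  haveI : ∀ c : ι, SigmaFinite ((volume : Measure ℝ).withDensity (gaussianPDF (y c) 1)) := by
    intro c; rw [← h1]; infer_instance
  rw [couplings]
  have : (fun c : ι => gaussianReal (y c) 1)
      = fun c => (volume : Measure ℝ).withDensity (gaussianPDF (y c) 1) := funext h1
  rw [this, nishimori_pi_withDensity _ _ (fun c => measurable_gaussianPDF _ _)]
  congr 1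
  funext j
  rw [ENNReal.ofReal_prod_of_nonneg fun i _ => gaussianPDFReal_nonneg _ _ _]
  rfl

lemma nishimori_integral_couplings {ι : Type*} [Fintype ι] (y : ι → ℝ)
    (h : (ι → ℝ) → ℝ) :
    ∫ j, h j ∂(couplings y)
      = ∫ j, (∏ c, gaussianPDFReal (y c) 1 (j c)) * h j
          ∂(Measure.pi fun _ : ι => (volume : Measure ℝ)) := by
  rw [nishimori_couplings_eq]
  have hm : Measurable fun j : ι → ℝ => (∏ c, gaussianPDFReal (y c) 1 (j c)).toNNReal :=
    (Finset.measurable_prod _ fun c _ =>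
      (measurable_gaussianPDFReal _ _).comp (measurable_pi_apply c)).real_toNNReal
  have hdens : (fun j : ι → ℝ => ENNReal.ofReal (∏ c, gaussianPDFReal (y c) 1 (j c)))
      = fun j => ((∏ c, gaussianPDFReal (y c) 1 (j c)).toNNReal : ℝ≥0∞) := rfl
  rw [hdens, integral_withDensity_eq_integral_smul hm]
  refine integral_congr_ae (Eventually.of_forall fun j => ?_)
  show (∏ c, gaussianPDFReal (y c) 1 (j c)).toNNReal • h j
      = (∏ c, gaussianPDFReal (y c) 1 (j c)) * h j
  rw [NNReal.smul_def, Real.coe_toNNReal _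
    (Finset.prod_nonneg fun c _ => gaussianPDFReal_nonneg _ _ _)]
  rfl

/-! spin/gauge algebra -/

lemma spin_beq (a b : Bool) : spin (a == b) = spin a * spin b := by
  cases a <;> cases b <;> simp [spin]

lemma spin_cases (s : Bool) : spin s = 1 ∨ spin s = -1 := by
  cases s <;> simp [spin]

lemma bondSpin_cases {V ι : Type*} (ep : ι → V × V) (S : V → Bool) (c : ι) :
    bondSpin ep S c = 1 ∨ bondSpin ep S c = -1 := by
  rcases spin_cases (S (ep c).1) with h1 | h1 <;>
    rcases spin_cases (S (ep c).2) with h2 | h2 <;>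
      rw [bondSpin, h1, h2] <;> norm_num

lemma bondSpin_mul_self {V ι : Type*} (ep : ι → V × V) (S : V → Bool) (c : ι) :
    bondSpin ep S c * bondSpin ep S c = 1 := by
  rcases bondSpin_cases ep S c with h | h <;> rw [h] <;> norm_num

lemma bondSpin_beq {V ι : Type*} (ep : ι → V × V) (τ S : V → Bool) (c : ι) :
    bondSpin ep (fun n => τ n == S n) c = bondSpin ep τ c * bondSpin ep S c := by
  unfold bondSpin
  rw [spin_beq, spin_beq]
  ring

/-- The gauge transformation of the couplings. -/
def gaugeMap {V ι : Type*} (ep : ι → V × V) (τ : V → Bool) (j : ι → ℝ) : ι → ℝ :=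
  fun c => bondSpin ep τ c * j c

lemma gaugeMap_invol {V ι : Type*} (ep : ι → V × V) (τ : V → Bool) :
    Function.Involutive (gaugeMap ep τ) := by
  intro j
  funext c
  simp only [gaugeMap, ← mul_assoc, bondSpin_mul_self, one_mul]

lemma gaugeMap_measurable {V ι : Type*} [MeasurableSpace ι] [Fintype ι]
    (ep : ι → V × V) (τ : V → Bool) :
    Measurable (gaugeMap ep τ) :=
  measurable_pi_lambda _ fun c => (measurable_pi_apply c).const_mul _

/-- The gauge transformation as a measurable equivalence. -/
def gaugeEquiv {V ι : Type*} [Fintype ι] (ep : ι → V × V) (τ : V → Bool) :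
    (ι → ℝ) ≃ᵐ (ι → ℝ) where
  toEquiv := (gaugeMap_invol ep τ).toPerm _
  measurable_toFun := measurable_pi_lambda _ fun c => (measurable_pi_apply c).const_mul _
  measurable_invFun := measurable_pi_lambda _ fun c => (measurable_pi_apply c).const_mul _

lemma gaugeMap_measurePreserving {V ι : Type*} [Fintype ι] (ep : ι → V × V) (τ : V → Bool) :
    MeasurePreserving (gaugeMap ep τ)
      (Measure.pi fun _ : ι => (volume : Measure ℝ))
      (Measure.pi fun _ : ι => (volume : Measure ℝ)) := by
  refine measurePreserving_pi _ _ (fun c => ?_)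
  have hmp : MeasurePreserving (fun t : ℝ => bondSpin ep τ c * t)
      (volume : Measure ℝ) (volume : Measure ℝ) := by
    rcases bondSpin_cases ep τ c with h | h
    · have he : (fun t : ℝ => bondSpin ep τ c * t) = id := by
        funext t; rw [h, one_mul]; rfl
      rw [he]; exact MeasurePreserving.id _
    · have he : (fun t : ℝ => bondSpin ep τ c * t) = fun t : ℝ => -t := by
        funext t; rw [h]; ring
      rw [he]; exact Measure.measurePreserving_neg _
  exact hmp

lemma potential_gauge {V ι : Type*} [Fintype ι] (ep : ι → V × V) (x j : ι → ℝ)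
    (τ S : V → Bool) :
    potential ep x (gaugeMap ep τ j) S = potential ep x j (fun n => τ n == S n) := by
  unfold potential gaugeMap
  refine Finset.sum_congr rfl fun c _ => ?_
  rw [bondSpin_beq]
  ring

/-- Flipping the spins by `τ` is an involutive bijection of configurations. -/
def xorPerm {V : Type*} (τ : V → Bool) : Equiv.Perm (V → Bool) :=
  Function.Involutive.toPerm (fun S n => τ n == S n)
    (fun S => by
      funext n
      show (τ n == (τ n == S n)) = S n
      cases τ n <;> cases S n <;> rfl)

lemma partitionFn_gauge {V ι : Type*} [Fintype V] [DecidableEq V] [Fintype ι]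
    (ep : ι → V × V) (x j : ι → ℝ) (τ : V → Bool) :
    partitionFn ep x (gaugeMap ep τ j) = partitionFn ep x j := by
  unfold partitionFn
  rw [← Equiv.sum_comp (xorPerm τ) (fun S => Real.exp (potential ep x j S))]
  exact Finset.sum_congr rfl fun S _ => by rw [potential_gauge]; rfl

lemma partitionFn_pos {V ι : Type*} [Fintype V] [DecidableEq V] [Fintype ι]
    (ep : ι → V × V) (x j : ι → ℝ) :
    0 < partitionFn ep x j :=
  Finset.sum_pos (fun S _ => Real.exp_pos _) Finset.univ_nonempty

lemma numer_gauge {V ι : Type*} [Fintype V] [DecidableEq V] [Fintype ι]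
    (ep : ι → V × V) (x j : ι → ℝ) (τ : V → Bool) (b : ι) :
    ∑ S : V → Bool, bondSpin ep S b * Real.exp (potential ep x (gaugeMap ep τ j) S)
      = bondSpin ep τ b * ∑ S : V → Bool, bondSpin ep S b * Real.exp (potential ep x j S) := by
  have := Equiv.sum_comp (xorPerm τ)
    (fun S => bondSpin ep S b * Real.exp (potential ep x (gaugeMap ep τ j) S))
  rw [← this, Finset.mul_sum]
  refine Finset.sum_congr rfl fun S _ => ?_
  have h1 : potential ep x (gaugeMap ep τ j) (xorPerm τ S) = potential ep x j S := by
    rw [potential_gauge]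
    congr 1
    funext n
    show (τ n == (τ n == S n)) = S n
    cases τ n <;> cases S n <;> rfl
  have h2 : bondSpin ep (xorPerm τ S) b = bondSpin ep τ b * bondSpin ep S b :=
    bondSpin_beq ep τ S b
  rw [h1, h2]
  ring

lemma gibbs_gauge {V ι : Type*} [Fintype V] [DecidableEq V] [Fintype ι]
    (ep : ι → V × V) (x j : ι → ℝ) (τ : V → Bool) (b : ι) :
    gibbs ep x (gaugeMap ep τ j) (fun S => bondSpin ep S b)
      = bondSpin ep τ b * gibbs ep x j (fun S => bondSpin ep S b) := by
  unfold gibbs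
  rw [numer_gauge, partitionFn_gauge, mul_div_assoc]

lemma gibbs_abs_le {V ι : Type*} [Fintype V] [DecidableEq V] [Fintype ι]
    (ep : ι → V × V) (x j : ι → ℝ) (b : ι) :
    |gibbs ep x j (fun S => bondSpin ep S b)| ≤ 1 := by
  have hZ := partitionFn_pos ep x j
  rw [gibbs, abs_div, abs_of_pos hZ, div_le_one hZ]
  calc |∑ S : V → Bool, bondSpin ep S b * Real.exp (potential ep x j S)|
      ≤ ∑ S : V → Bool, |bondSpin ep S b * Real.exp (potential ep x j S)| :=
        Finset.abs_sum_le_sum_abs _ _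
    _ = partitionFn ep x j := by
        refine Finset.sum_congr rfl fun S _ => ?_
        rw [abs_mul, abs_of_pos (Real.exp_pos _)]
        rcases bondSpin_cases ep S b with h | h <;> rw [h] <;> norm_num

lemma potential_continuous {V ι : Type*} [Fintype ι] (ep : ι → V × V) (x : ι → ℝ)
    (S : V → Bool) :
    Continuous fun j : ι → ℝ => potential ep x j S := by
  unfold potential
  exact continuous_finset_sum _ fun c _ =>
    (continuous_const.mul (continuous_apply c)).mul continuous_const

lemma gibbs_continuous {V ι : Type*} [Fintype V] [DecidableEq V] [Fintype ι]
    (ep : ι → V × V) (x : ι → ℝ) (b : ι) :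
    Continuous fun j : ι → ℝ => gibbs ep x j (fun S => bondSpin ep S b) := by
  unfold gibbs
  refine Continuous.div ?_ ?_ (fun j => (partitionFn_pos ep x j).ne')
  · exact continuous_finset_sum _ fun S _ =>
      continuous_const.mul (Real.continuous_exp.comp (potential_continuous ep x S))
  · exact continuous_finset_sum _ fun S _ =>
      Real.continuous_exp.comp (potential_continuous ep x S)

/-! Gaussian pdf identities. -/

lemma nishimori_pdf_flip {s m t : ℝ} (hs : s * s = 1) :
    gaussianPDFReal m 1 (s * t) = gaussianPDFReal (s * m) 1 t := by
  unfold gaussianPDFReal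
  congr 1
  congr 1
  have h : (s * t - m) ^ 2 = (t - s * m) ^ 2 := by
    linear_combination (t ^ 2 - m ^ 2) * hs
  rw [h]

lemma nishimori_pdf_tilt {s m t : ℝ} (hs : s * s = 1) :
    gaussianPDFReal (s * m) 1 t
      = gaussianPDFReal m 1 t * Real.exp ((s - 1) * (m * t)) := by
  unfold gaussianPDFReal
  conv_rhs => rw [mul_assoc, ← Real.exp_add]
  congr 1
  simp only [NNReal.coe_one]
  field_simp
  ring_nf
  rw [Real.exp_eq_exp]
  linear_combination (-1 / 2 * m ^ 2) * hs

lemma rho_tilt {V ι : Type*} [Fintype ι] (ep : ι → V × V) (x : ι → ℝ)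
    (τ : V → Bool) (j : ι → ℝ) :
    (∏ c, gaussianPDFReal (bondSpin ep τ c * x c) 1 (j c))
      = (∏ c, gaussianPDFReal (x c) 1 (j c))
        * Real.exp (potential ep x j τ - ∑ c, x c * j c) := by
  have h1 : ∀ c : ι, gaussianPDFReal (bondSpin ep τ c * x c) 1 (j c)
      = gaussianPDFReal (x c) 1 (j c)
        * Real.exp ((bondSpin ep τ c - 1) * (x c * j c)) :=
    fun c => nishimori_pdf_tilt (bondSpin_mul_self ep τ c)
  rw [Finset.prod_congr rfl fun c _ => h1 c, Finset.prod_mul_distrib, ← Real.exp_sum]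
  congr 2
  rw [potential, ← Finset.sum_sub_distrib]
  exact Finset.sum_congr rfl fun c _ => by ring

lemma rho_integrable {ι : Type*} [Fintype ι] (y : ι → ℝ) :
    Integrable (fun j : ι → ℝ => ∏ c, gaussianPDFReal (y c) 1 (j c))
      (Measure.pi fun _ : ι => (volume : Measure ℝ)) := by
  have h := MeasureTheory.Integrable.fintype_prod
    (f := fun c : ι => gaussianPDFReal (y c) 1)
    (fun c => integrable_gaussianPDFReal _ _)
  exact h

end Aux

/-- Nishimori gauge identity for a single bond correlation:
for every bond `b`, `[⟨S_b⟩] = [⟨S_b⟩²]`; in particular `[⟨S_b⟩] ≥ 0`. -/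
theorem nishimori_one_bond_identity
    {V ι : Type*} [Fintype V] [DecidableEq V] [Fintype ι]
    (ep : ι → V × V) (hep : ∀ b, (ep b).1 ≠ (ep b).2)
    (x : ι → ℝ) (hx : ∀ b, 0 ≤ x b) (b : ι) :
    quenched x (fun j => gibbs ep x j (fun S => bondSpin ep S b)) =
      quenched x (fun j => (gibbs ep x j (fun S => bondSpin ep S b)) ^ 2) ∧
    0 ≤ quenched x (fun j => gibbs ep x j (fun S => bondSpin ep S b)) := by
  classical
  set P : Measure (ι → ℝ) := Measure.pi fun _ : ι => (volume : Measure ℝ) with hP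
  set G : (ι → ℝ) → ℝ := fun j => gibbs ep x j (fun S => bondSpin ep S b) with hGdef
  have hGcont : Continuous G := gibbs_continuous ep x b
  have hGbdd : ∀ j, |G j| ≤ 1 := fun j => gibbs_abs_le ep x j b
  -- the gauge-averaging identity
  have main : ∀ (f : (ι → ℝ) → ℝ) (ε : (V → Bool) → ℝ), Continuous f →
      (∀ j, |f j| ≤ 1) → (∀ τ j, f (gaugeMap ep τ j) = ε τ * f j) →
      (Fintype.card (V → Bool) : ℝ) * ∫ j, f j ∂(couplings x)
        = ∫ j, (∑ τ : V → Bool, ε τ * Real.exp (potential ep x j τ)) *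
            (f j * (Real.exp (-∑ c, x c * j c) * ∏ c, gaussianPDFReal (x c) 1 (j c))) ∂P := by
    intro f ε hc hb hcov
    -- single gauge transformation
    have h1 : ∀ τ : V → Bool, ∫ j, f j ∂(couplings x)
        = ∫ j, ε τ * (f j * ∏ c, gaussianPDFReal (bondSpin ep τ c * x c) 1 (j c)) ∂P := by
      intro τ
      rw [nishimori_integral_couplings]
      have hcomp := ((gaugeMap_measurePreserving ep τ).integral_comp
        (gaugeEquiv ep τ).measurableEmbedding
        (fun j => (∏ c, gaussianPDFReal (x c) 1 (j c)) * f j)).symm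
      rw [hcomp]
      refine integral_congr_ae (Eventually.of_forall fun j => ?_)
      show (∏ c, gaussianPDFReal (x c) 1 (gaugeMap ep τ j c)) * f (gaugeMap ep τ j)
          = ε τ * (f j * ∏ c, gaussianPDFReal (bondSpin ep τ c * x c) 1 (j c))
      have hρ : (∏ c, gaussianPDFReal (x c) 1 (gaugeMap ep τ j c))
          = ∏ c, gaussianPDFReal (bondSpin ep τ c * x c) 1 (j c) :=
        Finset.prod_congr rfl fun c _ => nishimori_pdf_flip (bondSpin_mul_self ep τ c)
      rw [hρ, hcov]
      ring
    -- each gauge term is integrable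
    have hint : ∀ τ : V → Bool, Integrable
        (fun j => ε τ * (f j * ∏ c, gaussianPDFReal (bondSpin ep τ c * x c) 1 (j c))) P := by
      intro τ
      refine Integrable.const_mul ?_ _
      refine Integrable.bdd_mul (c := 1) (rho_integrable _) hc.aestronglyMeasurable (Eventually.of_forall fun j => ?_)
      simpa [Real.norm_eq_abs] using hb j
    calc (Fintype.card (V → Bool) : ℝ) * ∫ j, f j ∂(couplings x)
        = ∑ τ : V → Bool, ∫ j, ε τ * (f j * ∏ c, gaussianPDFReal (bondSpin ep τ c * x c) 1 (j c)) ∂P := by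
          rw [Finset.sum_congr rfl fun τ _ => (h1 τ).symm, Finset.sum_const, Finset.card_univ,
            nsmul_eq_mul]
      _ = ∫ j, ∑ τ : V → Bool, ε τ * (f j * ∏ c, gaussianPDFReal (bondSpin ep τ c * x c) 1 (j c)) ∂P :=
          (integral_finset_sum _ fun τ _ => hint τ).symm
      _ = _ := by
          refine integral_congr_ae (Eventually.of_forall fun j => ?_)
          beta_reduce
          rw [Finset.sum_mul]
          refine Finset.sum_congr rfl fun τ _ => ?_
          rw [rho_tilt, sub_eq_add_neg, Real.exp_add]
          ring
  -- apply to G with ε = bondSpin τ b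
  have eq1 := main G (fun τ => bondSpin ep τ b) hGcont hGbdd
    (fun τ j => gibbs_gauge ep x j τ b)
  -- apply to G² with ε = 1
  have eq2 := main (fun j => G j ^ 2) (fun _ => 1) (hGcont.pow 2)
    (fun j => by
      rw [abs_pow]
      calc |G j| ^ 2 ≤ 1 ^ 2 := pow_le_pow_left₀ (abs_nonneg _) (hGbdd j) 2
        _ = 1 := one_pow 2)
    (fun τ j => by
      show G (gaugeMap ep τ j) ^ 2 = 1 * G j ^ 2
      rw [hGdef]
      simp only []
      rw [gibbs_gauge ep x j τ b, mul_pow]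
      rcases bondSpin_cases ep τ b with h | h <;> rw [h] <;> ring)
  -- identify the τ-sums
  have hnum : ∀ j, (∑ τ : V → Bool, bondSpin ep τ b * Real.exp (potential ep x j τ))
      = G j * partitionFn ep x j := by
    intro j
    rw [hGdef]
    show _ = gibbs ep x j (fun S => bondSpin ep S b) * partitionFn ep x j
    rw [gibbs, div_mul_cancel₀ _ (partitionFn_pos ep x j).ne']
  have hZ : ∀ j, (∑ τ : V → Bool, (1 : ℝ) * Real.exp (potential ep x j τ))
      = partitionFn ep x j := by
    intro j
    rw [partitionFn]
    exact Finset.sum_congr rfl fun τ _ => one_mul _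
  have hcard : (0 : ℝ) < (Fintype.card (V → Bool) : ℝ) := by
    exact_mod_cast Fintype.card_pos
  have hkey : ∫ j, G j ∂(couplings x) = ∫ j, G j ^ 2 ∂(couplings x) := by
    have : (Fintype.card (V → Bool) : ℝ) * ∫ j, G j ∂(couplings x)
        = (Fintype.card (V → Bool) : ℝ) * ∫ j, G j ^ 2 ∂(couplings x) := by
      beta_reduce at eq1 eq2
      rw [eq1, eq2]
      refine integral_congr_ae (Eventually.of_forall fun j => ?_)
      beta_reduce
      rw [hnum j, hZ j]
      ring
    exact mul_left_cancel₀ hcard.ne' this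
  constructor
  · exact hkey
  · rw [quenched]
    show 0 ≤ ∫ j, G j ∂(couplings x)
    rw [hkey]
    exact integral_nonneg fun j => sq_nonneg _

end
end

section
/- Nishimori gauge identity for squared correlations: for every pair of bonds b, b' ∈ B, [⟨S_b⟩⟨S_{b'}⟩²] = [⟨S_b⟩²⟨S_{b'}⟩²]. -/
open MeasureTheory ProbabilityTheory Filter
open scoped ENNReal NNReal

noncomputable section

/-! ### Auxiliary measure-theoretic lemmas -/

namespace NishAux

theorem lintegral_pi_prod' {n : ℕ} {E : Fin n → Type*} [∀ i, MeasurableSpace (E i)]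
    (μ : ∀ i, Measure (E i)) [∀ i, SigmaFinite (μ i)] {f : ∀ i, E i → ℝ≥0∞}
    (hf : ∀ i, Measurable (f i)) :
    ∫⁻ x, ∏ i, f i (x i) ∂Measure.pi μ = ∏ i, ∫⁻ x, f i x ∂μ i := by
  induction n with
  | zero => simp
  | succ n ih =>
    have h := (measurePreserving_piFinSuccAbove μ 0).symm
    rw [← h.lintegral_comp_emb (MeasurableEquiv.measurableEmbedding _)]
    refine Eq.trans (lintegral_congr fun a => ?_)
      ((lintegral_prod_mul (f := f 0)
        (g := fun y : (j : Fin n) → E (Fin.succAbove 0 j) => ∏ i, f (Fin.succAbove 0 i) (y i))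
        (hf 0).aemeasurable
        (Measurable.aemeasurable (Finset.measurable_prod _ fun i _ =>
          (hf (Fin.succAbove 0 i)).comp (measurable_pi_apply i)))).trans ?_)
    · rw [Fin.prod_univ_succAbove _ 0]
      exact congrArg₂ _ (congrArg (f 0) (Fin.insertNth_apply_same (0 : Fin (n + 1)) a.1 a.2))
        (Finset.prod_congr rfl fun i _ =>
          congrArg _ (Fin.insertNth_apply_succAbove (0 : Fin (n + 1)) a.1 a.2 i))
    · rw [ih (fun i => μ (Fin.succAbove 0 i)) (fun i => hf _), Fin.prod_univ_succAbove _ 0]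

theorem lintegral_pi_prod {ι : Type*} [Fintype ι] {E : ι → Type*} [∀ i, MeasurableSpace (E i)]
    (μ : ∀ i, Measure (E i)) [∀ i, SigmaFinite (μ i)] {f : ∀ i, E i → ℝ≥0∞}
    (hf : ∀ i, Measurable (f i)) :
    ∫⁻ x, ∏ i, f i (x i) ∂Measure.pi μ = ∏ i, ∫⁻ x, f i x ∂μ i := by
  let e := (Fintype.equivFin ι).symm
  rw [← (measurePreserving_piCongrLeft μ e).lintegral_comp_emb
    (MeasurableEquiv.measurableEmbedding _)]
  simp only [MeasurableEquiv.coe_piCongrLeft]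
  have : ∀ x : (i' : Fin (Fintype.card ι)) → E (e i'),
      ∏ i, f i (Equiv.piCongrLeft E e x i) = ∏ i', f (e i') (x i') := by
    intro x
    rw [← e.prod_comp]
    exact Finset.prod_congr rfl fun i' _ => by rw [Equiv.piCongrLeft_apply_apply]
  simp_rw [this]
  rw [lintegral_pi_prod' (fun i => μ (e i)) (fun i => hf (e i)), ← e.prod_comp]

theorem pi_withDensity {ι : Type*} [Fintype ι] {E : ι → Type*}
    [∀ i, MeasurableSpace (E i)] (μ : ∀ i, Measure (E i)) [∀ i, SigmaFinite (μ i)]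
    {f : ∀ i, E i → ℝ≥0∞} (hf : ∀ i, Measurable (f i))
    [∀ i, SigmaFinite ((μ i).withDensity (f i))] :
    Measure.pi (fun i => (μ i).withDensity (f i)) =
      (Measure.pi μ).withDensity (fun x => ∏ i, f i (x i)) := by
  refine Measure.pi_eq (μ := fun i => (μ i).withDensity (f i)) (fun s hs => ?_)
  rw [withDensity_apply _ (MeasurableSet.univ_pi hs),
    ← lintegral_indicator (MeasurableSet.univ_pi hs)]
  have key : ∀ x : ∀ i, E i, Set.indicator (Set.pi Set.univ s) (fun x => ∏ i, f i (x i)) x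
      = ∏ i, Set.indicator (s i) (f i) (x i) := by
    intro x
    by_cases hx : x ∈ Set.pi Set.univ s
    · rw [Set.indicator_of_mem hx]
      exact Finset.prod_congr rfl fun i _ =>
        (Set.indicator_of_mem (hx i (Set.mem_univ i)) _).symm
    · rw [Set.indicator_of_notMem hx]
      obtain ⟨i, hi⟩ : ∃ i, x i ∉ s i := by
        by_contra h
        push_neg at h
        exact hx fun i _ => h i
      exact (Finset.prod_eq_zero (Finset.mem_univ i)
        (Set.indicator_of_notMem hi _)).symm
  simp_rw [key]
  rw [lintegral_pi_prod μ (fun i => (hf i).indicator (hs i))]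
  exact Finset.prod_congr rfl fun i _ => by
    rw [lintegral_indicator (hs i), withDensity_apply _ (hs i)]

/-- A unit-variance Gaussian as a density over the standard Gaussian. -/
theorem gaussian_shift (m : ℝ) :
    gaussianReal m 1 = (gaussianReal 0 1).withDensity
      (fun t => ENNReal.ofReal (Real.exp (m * t - m ^ 2 / 2))) := by
  have h1 : (1 : ℝ≥0) ≠ 0 := one_ne_zero
  have hg : Measurable fun t : ℝ => ENNReal.ofReal (Real.exp (m * t - m ^ 2 / 2)) := by
    fun_prop
  rw [gaussianReal_of_var_ne_zero m h1, gaussianReal_of_var_ne_zero 0 h1,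
    ← withDensity_mul _ (measurable_gaussianPDF 0 1) hg]
  congr 1
  funext t
  rw [Pi.mul_apply, gaussianPDF, gaussianPDF,
    ← ENNReal.ofReal_mul (gaussianPDFReal_nonneg 0 1 t)]
  congr 1
  unfold gaussianPDFReal
  simp only [NNReal.coe_one, mul_one, sub_zero]
  rw [mul_assoc, ← Real.exp_add]
  congr 2
  ring

end NishAux

/-! ### Spin-flip (gauge) combinatorics -/

namespace NishAux

lemma spin_beq (a c : Bool) : spin (a == c) = spin a * spin c := by
  cases a <;> cases c <;> norm_num [spin]

lemma spin_mul_self (a : Bool) : spin a * spin a = 1 := by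
  cases a <;> norm_num [spin]

variable {V ι : Type*} [Fintype V] [DecidableEq V] [Fintype ι]

lemma bondSpin_mul_self (ep : ι → V × V) (τ : V → Bool) (c : ι) :
    bondSpin ep τ c * bondSpin ep τ c = 1 := by
  unfold bondSpin
  rw [show ∀ a b : ℝ, a * b * (a * b) = (a * a) * (b * b) by intros; ring,
    spin_mul_self, spin_mul_self, one_mul]

lemma abs_spin (a : Bool) : |spin a| = 1 := by cases a <;> norm_num [spin]

lemma abs_bondSpin (ep : ι → V × V) (τ : V → Bool) (c : ι) :
    |bondSpin ep τ c| = 1 := by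
  rw [bondSpin, abs_mul, abs_spin, abs_spin, one_mul]

/-- The spin-flip equivalence `S ↦ (S == τ)` (pointwise XNOR). -/
def flipE (τ : V → Bool) : (V → Bool) ≃ (V → Bool) where
  toFun S n := S n == τ n
  invFun S n := S n == τ n
  left_inv S := funext fun n => by simp only []; cases S n <;> cases τ n <;> simp
  right_inv S := funext fun n => by simp only []; cases S n <;> cases τ n <;> simp

lemma bondSpin_flipE (ep : ι → V × V) (τ S : V → Bool) (c : ι) :
    bondSpin ep (flipE τ S) c = bondSpin ep S c * bondSpin ep τ c := by
  unfold bondSpin flipE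
  simp only [Equiv.coe_fn_mk]
  rw [spin_beq, spin_beq]
  ring

/-- The gauge transformation on the disorder. -/
def gauge (ep : ι → V × V) (τ : V → Bool) (j : ι → ℝ) : ι → ℝ :=
  fun c => bondSpin ep τ c * j c

lemma potential_gauge (ep : ι → V × V) (x : ι → ℝ) (τ : V → Bool) (j : ι → ℝ)
    (S : V → Bool) :
    potential ep x (gauge ep τ j) S = potential ep x j (flipE τ S) := by
  unfold potential gauge
  refine Finset.sum_congr rfl fun c _ => ?_
  rw [bondSpin_flipE]
  ring

lemma partitionFn_gauge (ep : ι → V × V) (x : ι → ℝ) (τ : V → Bool) (j : ι → ℝ) :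
    partitionFn ep x (gauge ep τ j) = partitionFn ep x j := by
  unfold partitionFn
  simp_rw [potential_gauge]
  exact Equiv.sum_comp (flipE τ) fun S => Real.exp (potential ep x j S)

lemma numer_gauge (ep : ι → V × V) (x : ι → ℝ) (τ : V → Bool) (j : ι → ℝ) (c : ι) :
    (∑ S : V → Bool, bondSpin ep S c * Real.exp (potential ep x (gauge ep τ j) S)) =
      bondSpin ep τ c *
        ∑ S : V → Bool, bondSpin ep S c * Real.exp (potential ep x j S) := by
  simp_rw [potential_gauge]
  have hb : ∀ S : V → Bool, bondSpin ep S c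
      = bondSpin ep (flipE τ S) c * bondSpin ep τ c := by
    intro S
    rw [bondSpin_flipE, mul_assoc, bondSpin_mul_self, mul_one]
  calc (∑ S : V → Bool, bondSpin ep S c * Real.exp (potential ep x j (flipE τ S)))
      = ∑ S : V → Bool, bondSpin ep τ c *
          (bondSpin ep (flipE τ S) c * Real.exp (potential ep x j (flipE τ S))) := by
        refine Finset.sum_congr rfl fun S _ => ?_
        rw [hb S]; ring
    _ = bondSpin ep τ c *
          ∑ S : V → Bool, bondSpin ep S c * Real.exp (potential ep x j S) := by
        rw [← Finset.mul_sum]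
        congr 1
        exact Equiv.sum_comp (flipE τ)
          (fun S => bondSpin ep S c * Real.exp (potential ep x j S))

lemma partitionFn_pos (ep : ι → V × V) (x j : ι → ℝ) : 0 < partitionFn ep x j :=
  Finset.sum_pos (fun S _ => Real.exp_pos _) Finset.univ_nonempty

lemma gibbs_bondSpin_gauge (ep : ι → V × V) (x : ι → ℝ) (τ : V → Bool) (j : ι → ℝ) (c : ι) :
    gibbs ep x (gauge ep τ j) (fun S => bondSpin ep S c) =
      bondSpin ep τ c * gibbs ep x j (fun S => bondSpin ep S c) := by
  unfold gibbs
  rw [partitionFn_gauge, numer_gauge, mul_div_assoc]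

lemma abs_gibbs_bondSpin_le_one (ep : ι → V × V) (x j : ι → ℝ) (c : ι) :
    |gibbs ep x j (fun S => bondSpin ep S c)| ≤ 1 := by
  unfold gibbs
  rw [abs_div, abs_of_pos (partitionFn_pos ep x j),
    div_le_one (partitionFn_pos ep x j)]
  calc |∑ S : V → Bool, bondSpin ep S c * Real.exp (potential ep x j S)|
      ≤ ∑ S : V → Bool, |bondSpin ep S c * Real.exp (potential ep x j S)| :=
        Finset.abs_sum_le_sum_abs _ _
    _ = ∑ S : V → Bool, Real.exp (potential ep x j S) := by
        refine Finset.sum_congr rfl fun S _ => ?_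
        rw [abs_mul, abs_bondSpin, one_mul, abs_of_pos (Real.exp_pos _)]
    _ = partitionFn ep x j := rfl

end NishAux

/-! ### Main proof -/

namespace NishAux

variable {V ι : Type*} [Fintype V] [DecidableEq V] [Fintype ι]

/-- The exponential weight relating `couplings y` to the standard Gaussian product. -/
def wght (y j : ι → ℝ) : ℝ := Real.exp (∑ c, (y c * j c - y c ^ 2 / 2))

lemma wght_pos (y j : ι → ℝ) : 0 < wght y j := Real.exp_pos _

lemma couplings_eq_withDensity (y : ι → ℝ) :
    couplings y = (couplings (0 : ι → ℝ)).withDensity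
      (fun j => ENNReal.ofReal (wght y j)) := by
  have hmeas : ∀ c : ι, Measurable
      (fun t : ℝ => ENNReal.ofReal (Real.exp (y c * t - y c ^ 2 / 2))) := by
    intro c
    exact (Real.measurable_exp.comp (by fun_prop)).ennreal_ofReal
  have hco : ∀ c : ι, (gaussianReal 0 1).withDensity
      (fun t => ENNReal.ofReal (Real.exp (y c * t - y c ^ 2 / 2)))
        = gaussianReal (y c) 1 := fun c => (gaussian_shift (y c)).symm
  haveI : ∀ c : ι, SigmaFinite ((gaussianReal 0 1).withDensity
      (fun t => ENNReal.ofReal (Real.exp (y c * t - y c ^ 2 / 2)))) := by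
    intro c
    rw [hco c]
    infer_instance
  have := pi_withDensity (E := fun _ : ι => ℝ) (fun _ => gaussianReal 0 1)
    (f := fun c t => ENNReal.ofReal (Real.exp (y c * t - y c ^ 2 / 2))) hmeas
  have hL : couplings y = Measure.pi (fun c : ι => (gaussianReal 0 1).withDensity
      (fun t => ENNReal.ofReal (Real.exp (y c * t - y c ^ 2 / 2)))) := by
    unfold couplings
    exact congrArg Measure.pi (funext fun c => (hco c).symm)
  rw [hL, this]
  have h0 : couplings (0 : ι → ℝ) = Measure.pi (fun _ : ι => gaussianReal 0 1) := by
    unfold couplings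
    exact congrArg Measure.pi (funext fun c => by norm_num)
  rw [h0]
  congr 1
  funext j
  rw [← ENNReal.ofReal_prod_of_nonneg (fun c _ => (Real.exp_pos _).le)]
  congr 1
  rw [wght, Real.exp_sum]

lemma quenched_eq_integral (y : ι → ℝ) (F : (ι → ℝ) → ℝ) :
    quenched y F = ∫ j, wght y j * F j ∂(couplings (0 : ι → ℝ)) := by
  have hw : Measurable fun j : ι → ℝ => (wght y j).toNNReal := by
    apply Measurable.real_toNNReal
    exact Real.measurable_exp.comp (by
      apply Finset.measurable_sum
      intro c _
      fun_prop)
  rw [quenched, couplings_eq_withDensity y]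
  have : (fun j : ι → ℝ => ENNReal.ofReal (wght y j))
      = fun j => ((wght y j).toNNReal : ℝ≥0∞) := rfl
  rw [this, integral_withDensity_eq_integral_smul hw F]
  refine integral_congr_ae (Filter.Eventually.of_forall fun j => ?_)
  simp only [NNReal.smul_def, smul_eq_mul, Real.coe_toNNReal _ (wght_pos y j).le]

lemma integrable_wght (y : ι → ℝ) :
    Integrable (fun j => wght y j) (couplings (0 : ι → ℝ)) := by
  have hcont : Continuous fun j : ι → ℝ => wght y j := by
    apply Real.continuous_exp.comp
    exact continuous_finset_sum _ fun c _ => by fun_prop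
  refine ⟨hcont.aestronglyMeasurable, ?_⟩
  rw [hasFiniteIntegral_iff_norm]
  have : ∀ j : ι → ℝ, ENNReal.ofReal ‖wght y j‖ = ENNReal.ofReal (wght y j) := by
    intro j
    rw [Real.norm_eq_abs, abs_of_pos (wght_pos y j)]
  simp_rw [this]
  have : ∫⁻ j, ENNReal.ofReal (wght y j) ∂(couplings (0 : ι → ℝ))
      = ((couplings (0 : ι → ℝ)).withDensity (fun j => ENNReal.ofReal (wght y j)))
          Set.univ := by
    rw [withDensity_apply _ MeasurableSet.univ, setLIntegral_univ]
  rw [this, ← couplings_eq_withDensity y]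
  haveI : IsProbabilityMeasure (couplings y) := by
    unfold couplings
    infer_instance
  simp

lemma integrable_exp_potential (ep : ι → V × V) (x : ι → ℝ) (τ : V → Bool) :
    Integrable (fun j => Real.exp (potential ep x j τ)) (couplings (0 : ι → ℝ)) := by
  set a : ι → ℝ := fun c => x c * bondSpin ep τ c with ha
  have key : ∀ j : ι → ℝ, Real.exp (potential ep x j τ)
      = wght a j * Real.exp (∑ c, a c ^ 2 / 2) := by
    intro j
    rw [wght, ← Real.exp_add]
    congr 1
    rw [potential, ← Finset.sum_add_distrib]
    refine Finset.sum_congr rfl fun c _ => ?_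
    simp only [ha]
    ring
  simp_rw [key]
  exact (integrable_wght a).mul_const _

lemma measurePreserving_gauge (ep : ι → V × V) (τ : V → Bool) :
    MeasurePreserving (gauge ep τ) (couplings (0 : ι → ℝ)) (couplings (0 : ι → ℝ)) := by
  unfold couplings gauge
  refine measurePreserving_pi _ _ (fun c => ?_)
  constructor
  · exact measurable_id.const_mul _
  · simp only [Pi.zero_apply]
    rw [gaussianReal_map_const_mul (bondSpin ep τ c)]
    have h2 : (.mk (bondSpin ep τ c ^ 2) (sq_nonneg _) : ℝ≥0) = 1 := by
      ext
      simp only [NNReal.coe_one]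
      show bondSpin ep τ c ^ 2 = 1
      rw [sq]
      exact bondSpin_mul_self ep τ c
    rw [h2]
    norm_num

end NishAux

/-- Nishimori gauge identity for squared correlations:
for all bonds `b, b'`, `[⟨S_b⟩⟨S_{b'}⟩²] = [⟨S_b⟩²⟨S_{b'}⟩²]`. -/
theorem nishimori_squared_identity
    {V ι : Type*} [Fintype V] [DecidableEq V] [Fintype ι]
    (ep : ι → V × V) (hep : ∀ b, (ep b).1 ≠ (ep b).2)
    (x : ι → ℝ) (hx : ∀ b, 0 ≤ x b) (b b' : ι) :
    quenched x (fun j =>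
        gibbs ep x j (fun S => bondSpin ep S b) *
          (gibbs ep x j (fun S => bondSpin ep S b')) ^ 2) =
      quenched x (fun j =>
        (gibbs ep x j (fun S => bondSpin ep S b)) ^ 2 *
          (gibbs ep x j (fun S => bondSpin ep S b')) ^ 2) := by
  classical
  open NishAux in
  set μ0 := couplings (0 : ι → ℝ) with hμ0
  set A : (ι → ℝ) → ℝ := fun j => gibbs ep x j (fun S => bondSpin ep S b) with hA
  set B : (ι → ℝ) → ℝ := fun j => gibbs ep x j (fun S => bondSpin ep S b') with hB
  set Z : (ι → ℝ) → ℝ := fun j => partitionFn ep x j with hZ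
  set K : ℝ := ∑ c, x c ^ 2 / 2 with hK
  -- continuity facts
  have hpot_cont : ∀ S : V → Bool, Continuous fun j : ι → ℝ => potential ep x j S := by
    intro S
    apply continuous_finset_sum
    intro c _
    fun_prop
  have hZ_cont : Continuous Z := by
    apply continuous_finset_sum
    intro S _
    exact Real.continuous_exp.comp (hpot_cont S)
  have hgibbs_cont : ∀ c : ι, Continuous fun j : ι → ℝ =>
      gibbs ep x j (fun S => bondSpin ep S c) := by
    intro c
    apply Continuous.div
    · exact continuous_finset_sum _ fun S _ =>
        continuous_const.mul (Real.continuous_exp.comp (hpot_cont S))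
    · exact hZ_cont
    · exact fun j => (NishAux.partitionFn_pos ep x j).ne'
  have hA_cont : Continuous A := hgibbs_cont b
  have hB_cont : Continuous B := hgibbs_cont b'
  have hw_cont : Continuous fun j : ι → ℝ => NishAux.wght x j := by
    apply Real.continuous_exp.comp
    exact continuous_finset_sum _ fun c _ => by fun_prop
  -- the weight after gauge transformation
  have hw_gauge : ∀ (τ : V → Bool) (j : ι → ℝ),
      NishAux.wght x (NishAux.gauge ep τ j)
        = Real.exp (potential ep x j τ) * Real.exp (-K) := by
    intro τ j
    rw [NishAux.wght, ← Real.exp_add]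
    congr 1
    have hpt : ∀ c : ι, x c * (NishAux.gauge ep τ j c) - x c ^ 2 / 2
        = x c * j c * bondSpin ep τ c - x c ^ 2 / 2 := by
      intro c
      simp only [NishAux.gauge]
      ring
    calc ∑ c, (x c * (NishAux.gauge ep τ j c) - x c ^ 2 / 2)
        = ∑ c, (x c * j c * bondSpin ep τ c - x c ^ 2 / 2) :=
          Finset.sum_congr rfl fun c _ => hpt c
      _ = (∑ c, x c * j c * bondSpin ep τ c) - ∑ c, x c ^ 2 / 2 :=
          Finset.sum_sub_distrib _ _
      _ = potential ep x j τ + -K := by rw [potential, hK, sub_eq_add_neg]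
  -- squares of bond spins are 1
  have h2 : ∀ (τ : V → Bool) (c : ι), bondSpin ep τ c ^ 2 = 1 := by
    intro τ c
    rw [sq]
    exact NishAux.bondSpin_mul_self ep τ c
  -- gauge covariance of the observables
  have hA_gauge : ∀ (τ : V → Bool) (j : ι → ℝ),
      A (NishAux.gauge ep τ j) = bondSpin ep τ b * A j := fun τ j =>
    NishAux.gibbs_bondSpin_gauge ep x τ j b
  have hB_gauge : ∀ (τ : V → Bool) (j : ι → ℝ),
      B (NishAux.gauge ep τ j) = bondSpin ep τ b' * B j := fun τ j =>
    NishAux.gibbs_bondSpin_gauge ep x τ j b'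
  -- invariance of the base measure
  have hgauge_int : ∀ (τ : V → Bool) (G : (ι → ℝ) → ℝ),
      AEStronglyMeasurable G (couplings (0 : ι → ℝ)) →
      ∫ j, G j ∂(couplings (0 : ι → ℝ))
        = ∫ j, G (NishAux.gauge ep τ j) ∂(couplings (0 : ι → ℝ)) := by
    intro τ G hG
    have hmp := NishAux.measurePreserving_gauge ep τ
    have hG' : AEStronglyMeasurable G
        (Measure.map (NishAux.gauge ep τ) (couplings (0 : ι → ℝ))) := by
      rw [hmp.map_eq]
      exact hG
    conv_lhs => rw [← hmp.map_eq]
    exact integral_map hmp.measurable.aemeasurable hG'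
  -- the two observables
  set g1 : (ι → ℝ) → ℝ := fun j => A j * B j ^ 2 with hg1
  set g2 : (ι → ℝ) → ℝ := fun j => A j ^ 2 * B j ^ 2 with hg2
  have hg1_cont : Continuous g1 := hA_cont.mul (hB_cont.pow 2)
  have hg2_cont : Continuous g2 := (hA_cont.pow 2).mul (hB_cont.pow 2)
  have habsA : ∀ j, |A j| ≤ 1 := fun j => NishAux.abs_gibbs_bondSpin_le_one ep x j b
  have habsB : ∀ j, |B j| ≤ 1 := fun j => NishAux.abs_gibbs_bondSpin_le_one ep x j b'
  have habsg1 : ∀ j, |g1 j| ≤ 1 := by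
    intro j
    rw [hg1]
    simp only [abs_mul, abs_pow]
    have := habsA j
    have := habsB j
    have h0A := abs_nonneg (A j)
    have h0B := abs_nonneg (B j)
    nlinarith
  have habsg2 : ∀ j, |g2 j| ≤ 1 := by
    intro j
    rw [hg2]
    simp only [abs_mul, abs_pow]
    have hA1 := habsA j
    have hB1 := habsB j
    have h0A := abs_nonneg (A j)
    have h0B := abs_nonneg (B j)
    have hA2 : |A j| ^ 2 ≤ 1 := by nlinarith
    have hB2 : |B j| ^ 2 ≤ 1 := by nlinarith
    nlinarith [sq_nonneg (|A j|), sq_nonneg (|B j|)]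
  -- per-τ identities for both sides
  have key1 : ∀ τ : V → Bool, quenched x g1
      = ∫ j, (Real.exp (-K) * (bondSpin ep τ b * g1 j))
          * Real.exp (potential ep x j τ) ∂(couplings (0 : ι → ℝ)) := by
    intro τ
    rw [NishAux.quenched_eq_integral x g1,
      hgauge_int τ (fun j => NishAux.wght x j * g1 j) ((hw_cont.mul hg1_cont).aestronglyMeasurable)]
    refine integral_congr_ae (Filter.Eventually.of_forall fun j => ?_)
    rw [hg1]
    simp only []
    rw [hw_gauge τ j, hA_gauge τ j, hB_gauge τ j, mul_pow, h2 τ b']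
    ring
  have key2 : ∀ τ : V → Bool, quenched x g2
      = ∫ j, (Real.exp (-K) * g2 j)
          * Real.exp (potential ep x j τ) ∂(couplings (0 : ι → ℝ)) := by
    intro τ
    rw [NishAux.quenched_eq_integral x g2,
      hgauge_int τ (fun j => NishAux.wght x j * g2 j) ((hw_cont.mul hg2_cont).aestronglyMeasurable)]
    refine integral_congr_ae (Filter.Eventually.of_forall fun j => ?_)
    rw [hg2]
    simp only []
    rw [hw_gauge τ j, hA_gauge τ j, hB_gauge τ j, mul_pow, mul_pow, h2 τ b', h2 τ b]
    ring
  -- integrability of each τ-term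
  have hint1 : ∀ τ : V → Bool, Integrable
      (fun j => (Real.exp (-K) * (bondSpin ep τ b * g1 j))
        * Real.exp (potential ep x j τ)) (couplings (0 : ι → ℝ)) := by
    intro τ
    refine (NishAux.integrable_exp_potential ep x τ).bdd_mul
      ((continuous_const.mul (continuous_const.mul hg1_cont)).aestronglyMeasurable)
      (c := Real.exp (-K)) (Filter.Eventually.of_forall fun j => ?_)
    rw [Real.norm_eq_abs, abs_mul, abs_mul, NishAux.abs_bondSpin,
      abs_of_pos (Real.exp_pos _), one_mul]
    nlinarith [habsg1 j, Real.exp_pos (-K), abs_nonneg (g1 j)]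
  have hint2 : ∀ τ : V → Bool, Integrable
      (fun j => (Real.exp (-K) * g2 j)
        * Real.exp (potential ep x j τ)) (couplings (0 : ι → ℝ)) := by
    intro τ
    refine (NishAux.integrable_exp_potential ep x τ).bdd_mul
      ((continuous_const.mul hg2_cont).aestronglyMeasurable)
      (c := Real.exp (-K)) (Filter.Eventually.of_forall fun j => ?_)
    rw [Real.norm_eq_abs, abs_mul, abs_of_pos (Real.exp_pos _)]
    nlinarith [habsg2 j, Real.exp_pos (-K), abs_nonneg (g2 j)]
  -- the gibbs numerator identity
  have hnum : ∀ j : ι → ℝ,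
      (∑ τ : V → Bool, bondSpin ep τ b * Real.exp (potential ep x j τ))
        = A j * Z j := by
    intro j
    rw [hA, hZ]
    simp only [gibbs]
    rw [div_mul_cancel₀ _ (NishAux.partitionFn_pos ep x j).ne']
  have hZsum : ∀ j : ι → ℝ,
      (∑ τ : V → Bool, Real.exp (potential ep x j τ)) = Z j := fun j => rfl
  -- summing the per-τ identities
  have hsum1 : (∑ τ : V → Bool,
        ∫ j, (Real.exp (-K) * (bondSpin ep τ b * g1 j))
          * Real.exp (potential ep x j τ) ∂(couplings (0 : ι → ℝ)))
      = ∫ j, Real.exp (-K) * (g1 j * (A j * Z j)) ∂(couplings (0 : ι → ℝ)) := by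
    rw [← integral_finset_sum Finset.univ (fun τ _ => hint1 τ)]
    refine integral_congr_ae (Filter.Eventually.of_forall fun j => ?_)
    beta_reduce
    rw [← hnum j, Finset.mul_sum, Finset.mul_sum]
    exact Finset.sum_congr rfl fun τ _ => by ring
  have hsum2 : (∑ τ : V → Bool,
        ∫ j, (Real.exp (-K) * g2 j)
          * Real.exp (potential ep x j τ) ∂(couplings (0 : ι → ℝ)))
      = ∫ j, Real.exp (-K) * (g2 j * Z j) ∂(couplings (0 : ι → ℝ)) := by
    rw [← integral_finset_sum Finset.univ (fun τ _ => hint2 τ)]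
    refine integral_congr_ae (Filter.Eventually.of_forall fun j => ?_)
    beta_reduce
    rw [← hZsum j, Finset.mul_sum, Finset.mul_sum]
    exact Finset.sum_congr rfl fun τ _ => by ring
  -- the two summed integrals agree
  have hmid : (∫ j, Real.exp (-K) * (g1 j * (A j * Z j)) ∂(couplings (0 : ι → ℝ)))
      = ∫ j, Real.exp (-K) * (g2 j * Z j) ∂(couplings (0 : ι → ℝ)) := by
    refine integral_congr_ae (Filter.Eventually.of_forall fun j => ?_)
    rw [hg1, hg2]
    beta_reduce
    ring
  -- conclude by cancelling the (positive) number of gauge configurations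
  have hcard : ((Fintype.card (V → Bool) : ℝ)) ≠ 0 := by
    exact_mod_cast Fintype.card_ne_zero
  refine mul_left_cancel₀ hcard ?_
  have e1 : (Fintype.card (V → Bool) : ℝ) * quenched x g1
      = ∑ τ : V → Bool, ∫ j, (Real.exp (-K) * (bondSpin ep τ b * g1 j))
          * Real.exp (potential ep x j τ) ∂(couplings (0 : ι → ℝ)) := by
    rw [Finset.sum_congr rfl (fun τ _ => (key1 τ).symm), Finset.sum_const,
      Finset.card_univ, nsmul_eq_mul]
  have e2 : (Fintype.card (V → Bool) : ℝ) * quenched x g2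
      = ∑ τ : V → Bool, ∫ j, (Real.exp (-K) * g2 j)
          * Real.exp (potential ep x j τ) ∂(couplings (0 : ι → ℝ)) := by
    rw [Finset.sum_congr rfl (fun τ _ => (key2 τ).symm), Finset.sum_const,
      Finset.card_univ, nsmul_eq_mul]
  rw [e1, e2, hsum1, hsum2, hmid]

end
end
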